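/- arXiv:math/9807057 — 3 statements merged into one kernel-verified Lean document; each statement's English description precedes it below -/
import Mathlib

section
/- Let n be a positive integer. The family of bounded operators (π(x,y))_{(x,y) ∈ ℝ^{2n}} on L²(ℝⁿ) is linearly independent over ℂ; that is, if c : ℝ^{2n} → ℂ is finitely supported and Σ_{(x,y)} c(x,y)·π(x,y) = 0 in B(L²(ℝⁿ)), then c is identically zero. -/
set_option maxHeartbeats 1000000
set_option synthInstance.maxHeartbeats 1000000

open MeasureTheory Complex

noncomputable section

abbrev RV (n : ℕ) := Fin n → ℝ

abbrev L2 (n : ℕ) := Lp ℂ 2 (volume : Measure (RV n))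

/-- The dot product on `ℝⁿ`. -/
def dotR {n : ℕ} (x y : RV n) : ℝ := ∑ i, x i * y i

/-- The function `t ↦ e^{2πi y·t} f(t+x)`. -/
def tfsFun {n : ℕ} (x y : RV n) (f : RV n → ℂ) : RV n → ℂ :=
  fun t => Complex.exp (((2 * Real.pi * dotR y t : ℝ) : ℂ) * Complex.I) * f (t + x)

lemma memLp_tfsFun {n : ℕ} (x y : RV n) (f : L2 n) :
    MemLp (tfsFun x y (f : RV n → ℂ)) 2 (volume : Measure (RV n)) := by
  have hmp : MeasurePreserving (fun t : RV n => t + x) volume volume :=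
    measurePreserving_add_right volume x
  have h1 : MemLp (fun t : RV n => (f : RV n → ℂ) (t + x)) 2 volume :=
    (Lp.memLp f).comp_measurePreserving hmp
  have hcont : Continuous fun t : RV n =>
      Complex.exp (((2 * Real.pi * dotR y t : ℝ) : ℂ) * Complex.I) := by
    unfold dotR
    fun_prop
  refine MemLp.of_le h1 (hcont.aestronglyMeasurable.mul h1.1) ?_
  filter_upwards with t
  simp only [tfsFun, norm_mul]
  rw [Complex.norm_exp_ofReal_mul_I, one_mul]
lemma tfsFun_congr {n : ℕ} (x y : RV n) {f g : RV n → ℂ}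
    (h : f =ᵐ[(volume : Measure (RV n))] g) :
    tfsFun x y f =ᵐ[(volume : Measure (RV n))] tfsFun x y g := by
  have hmp : MeasurePreserving (fun t : RV n => t + x) volume volume :=
    measurePreserving_add_right volume x
  have h2 := hmp.quasiMeasurePreserving.ae_eq_comp h
  filter_upwards [h2] with t ht
  simp only [Function.comp] at ht
  simp [tfsFun, ht]

/-- The time-frequency shift `π(x,y)` as a bounded operator on `L²(ℝⁿ)`:
`(π(x,y)f)(t) = e^{2πi y·t} f(t+x)`. -/
def TFS {n : ℕ} (x y : RV n) : L2 n →L[ℂ] L2 n :=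
  LinearMap.mkContinuous
    { toFun := fun f => (memLp_tfsFun x y f).toLp _
      map_add' := fun f g => by
        apply Lp.ext
        have h6 := tfsFun_congr x y (Lp.coeFn_add f g)
        filter_upwards [(memLp_tfsFun x y (f + g)).coeFn_toLp, h6,
          Lp.coeFn_add ((memLp_tfsFun x y f).toLp _) ((memLp_tfsFun x y g).toLp _),
          (memLp_tfsFun x y f).coeFn_toLp, (memLp_tfsFun x y g).coeFn_toLp]
          with t e1 e6 e4 e2 e3
        rw [e1, e6, e4, Pi.add_apply, e2, e3]
        simp [tfsFun, mul_add]
      map_smul' := fun c f => by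
        apply Lp.ext
        have h6 := tfsFun_congr x y (Lp.coeFn_smul c f)
        filter_upwards [(memLp_tfsFun x y (c • f)).coeFn_toLp, h6,
          Lp.coeFn_smul c ((memLp_tfsFun x y f).toLp _),
          (memLp_tfsFun x y f).coeFn_toLp]
          with t e1 e6 e4 e2
        simp only [RingHom.id_apply]
        rw [e1, e6, e4, Pi.smul_apply, e2]
        simp [tfsFun]
        ring }
    1
    (fun f => by
      have hmp : MeasurePreserving (fun t : RV n => t + x) volume volume :=
        measurePreserving_add_right volume x
      simp only [LinearMap.coe_mk, AddHom.coe_mk, one_mul]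
      rw [Lp.norm_toLp _ (memLp_tfsFun x y f), Lp.norm_def]
      refine ENNReal.toReal_mono (Lp.eLpNorm_ne_top f) ?_
      have h1 : eLpNorm (tfsFun x y (f : RV n → ℂ)) 2 volume
          ≤ eLpNorm (((f : RV n → ℂ)) ∘ (fun t => t + x)) 2 volume := by
        refine eLpNorm_mono_ae ?_
        filter_upwards with t
        simp only [tfsFun, norm_mul, Function.comp]
        rw [Complex.norm_exp_ofReal_mul_I, one_mul]
      refine h1.trans ?_
      rw [eLpNorm_comp_measurePreserving (Lp.aestronglyMeasurable f) hmp])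

/-- `π(g)` for `g = (x,y) ∈ ℝ²ⁿ`. -/
def TFSp {n : ℕ} (g : RV n × RV n) : L2 n →L[ℂ] L2 n := TFS g.1 g.2

lemma TFS_coeFn {n : ℕ} (x y : RV n) (f : L2 n) :
    (TFS x y f : RV n → ℂ) =ᵐ[(volume : Measure (RV n))] tfsFun x y (f : RV n → ℂ) :=
  (memLp_tfsFun x y f).coeFn_toLp

lemma dotR_comm {n : ℕ} (x y : RV n) : dotR x y = dotR y x := by
  simp [dotR, mul_comm]

lemma dotR_add_right {n : ℕ} (y t a : RV n) : dotR y (t + a) = dotR y t + dotR y a := by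
  simp [dotR, mul_add, Finset.sum_add_distrib]

lemma dotR_add_left {n : ℕ} (b d t : RV n) : dotR (b + d) t = dotR b t + dotR d t := by
  simp [dotR, add_mul, Finset.sum_add_distrib]

lemma TFS_one {n : ℕ} : TFS (0 : RV n) (0 : RV n) = 1 := by
  refine ContinuousLinearMap.ext fun f => ?_
  apply Lp.ext
  filter_upwards [TFS_coeFn (0 : RV n) 0 f] with t ht
  rw [ht]
  simp [tfsFun, dotR]

lemma TFS_mul {n : ℕ} (a b c d : RV n) :
    TFS a b * TFS c d
      = Complex.exp (((2 * Real.pi * dotR a d : ℝ) : ℂ) * Complex.I) • TFS (a + c) (b + d) := by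
  refine ContinuousLinearMap.ext fun f => ?_
  apply Lp.ext
  have h1 := TFS_coeFn a b (TFS c d f)
  have h2 := tfsFun_congr a b (TFS_coeFn c d f)
  have h3 := Lp.coeFn_smul (Complex.exp (((2 * Real.pi * dotR a d : ℝ) : ℂ) * Complex.I))
    (TFS (a + c) (b + d) f)
  filter_upwards [h1, h2, h3, TFS_coeFn (a + c) (b + d) f] with t e1 e2 e3 e4
  show (TFS a b) ((TFS c d) f) t = _
  rw [ContinuousLinearMap.smul_apply, e1, e2, e3, Pi.smul_apply, e4]
  simp only [tfsFun, smul_eq_mul]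
  rw [add_assoc, ← mul_assoc, ← mul_assoc, ← Complex.exp_add, ← Complex.exp_add]
  congr 2
  rw [← add_mul, ← add_mul]
  congr 1
  push_cast
  rw [dotR_add_right, dotR_add_left, dotR_comm a d]
  push_cast
  ring

lemma TFSp_mul {n : ℕ} (g h : RV n × RV n) :
    TFSp g * TFSp h
      = Complex.exp (((2 * Real.pi * dotR g.1 h.2 : ℝ) : ℂ) * Complex.I) • TFSp (g + h) :=
  TFS_mul g.1 g.2 h.1 h.2

/-- The linear span of the `π(g)`, `g ∈ G`, inside `B(L²(ℝⁿ))`, as a `ℂ`-submodule. -/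
def spanTFS (n : ℕ) (G : AddSubgroup (RV n × RV n)) : Submodule ℂ (L2 n →L[ℂ] L2 n) :=
  Submodule.span ℂ (Set.range fun g : G => TFSp (g : RV n × RV n))

lemma one_mem_spanTFS (n : ℕ) (G : AddSubgroup (RV n × RV n)) :
    (1 : L2 n →L[ℂ] L2 n) ∈ spanTFS n G := by
  refine Submodule.subset_span ⟨0, ?_⟩
  show TFSp ((0 : RV n × RV n)) = 1
  exact TFS_one

lemma mul_mem_spanTFS {n : ℕ} {G : AddSubgroup (RV n × RV n)}
    {x y : L2 n →L[ℂ] L2 n} (hx : x ∈ spanTFS n G) (hy : y ∈ spanTFS n G) :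
    x * y ∈ spanTFS n G := by
  have h : spanTFS n G * spanTFS n G ≤ spanTFS n G := by
    rw [spanTFS, Submodule.span_mul_span]
    refine Submodule.span_le.2 ?_
    rintro z ⟨u, ⟨g, rfl⟩, v, ⟨k, rfl⟩, rfl⟩
    show TFSp (g : RV n × RV n) * TFSp (k : RV n × RV n) ∈ _
    rw [TFSp_mul]
    refine Submodule.smul_mem _ _ (Submodule.subset_span ⟨g + k, ?_⟩)
    norm_cast
  exact h (Submodule.mul_mem_mul hx hy)

/-- `ℂ*G`: the linear span of the `π(g)`, `g ∈ G`, as a subalgebra of `B(L²(ℝⁿ))`. -/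
def CGalg (n : ℕ) (G : AddSubgroup (RV n × RV n)) : Subalgebra ℂ (L2 n →L[ℂ] L2 n) :=
  (spanTFS n G).toSubalgebra (one_mem_spanTFS n G) (fun _ _ => mul_mem_spanTFS)

/-- `W*G`: the von Neumann algebra generated by `ℂ*G`, realized as the double
commutant of `ℂ*G` in `B(L²(ℝⁿ))`. -/
def WstarAlg (n : ℕ) (G : AddSubgroup (RV n × RV n)) : Subalgebra ℂ (L2 n →L[ℂ] L2 n) :=
  Subalgebra.centralizer ℂ
    ((Subalgebra.centralizer ℂ ((spanTFS n G : Set (L2 n →L[ℂ] L2 n)))) :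
      Set (L2 n →L[ℂ] L2 n))

lemma TFSp_mem_WstarAlg {n : ℕ} {G : AddSubgroup (RV n × RV n)} (g : G) :
    TFSp (g : RV n × RV n) ∈ WstarAlg n G := by
  rw [WstarAlg, Subalgebra.mem_centralizer_iff]
  intro c hc
  rw [SetLike.mem_coe, Subalgebra.mem_centralizer_iff] at hc
  exact (hc _ (Submodule.subset_span ⟨g, rfl⟩)).symm


namespace Statement4Aux

open Metric

variable {n : ℕ}

/-- The character `t ↦ e^{2πi y·t}` as a monoid hom on `Multiplicative (RV n)`. -/
def charHom (y : RV n) : Multiplicative (RV n) →* ℂ where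
  toFun t := Complex.exp (((2 * Real.pi * dotR y (Multiplicative.toAdd t) : ℝ) : ℂ) * Complex.I)
  map_one' := by simp [dotR]
  map_mul' s t := by
    have h : dotR y (Multiplicative.toAdd (s * t))
        = dotR y (Multiplicative.toAdd s) + dotR y (Multiplicative.toAdd t) :=
      dotR_add_right y _ _
    simp only [h, ← Complex.exp_add]
    congr 1
    push_cast
    ring

lemma dotR_sub_left (a b t : RV n) : dotR (a - b) t = dotR a t - dotR b t := by
  simp [dotR, sub_mul, Finset.sum_sub_distrib]

lemma dist_shift (t p a : RV n) : dist (t + a) p = dist t (p - a) := by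
  rw [dist_eq_norm, dist_eq_norm]
  congr 1
  abel

lemma dist_sub_sub (p a b : RV n) : dist (p - a) (p - b) = dist a b := by
  rw [dist_eq_norm, dist_eq_norm, show p - a - (p - b) = b - a by abel, norm_sub_rev]

lemma charHom_injective : Function.Injective (charHom (n := n)) := by
  intro y y' hyy'
  by_contra hne
  have ha0 : y - y' ≠ 0 := sub_ne_zero.mpr hne
  have hd : 0 < dotR (y - y') (y - y') := by
    obtain ⟨i, hi⟩ := Function.ne_iff.mp ha0
    refine Finset.sum_pos' (fun j _ => mul_self_nonneg _)
      ⟨i, Finset.mem_univ i, mul_self_pos.mpr (by simpa using hi)⟩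
  obtain ⟨d, hdd, hd'⟩ : ∃ d : ℝ, dotR (y - y') (y - y') = d ∧ 0 < d := ⟨_, rfl, hd⟩
  set t : RV n := (1 / (4 * d)) • (y - y') with ht
  have hdt : dotR (y - y') t = 1 / 4 := by
    have h1 : dotR (y - y') t = (1 / (4 * d)) * dotR (y - y') (y - y') := by
      rw [ht]
      simp only [dotR, Pi.smul_apply, smul_eq_mul, Finset.mul_sum]
      apply Finset.sum_congr rfl
      intro j _
      ring
    rw [h1, hdd]
    field_simp
  have h1 : Complex.exp (((2 * Real.pi * dotR y t : ℝ) : ℂ) * Complex.I)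
      = Complex.exp (((2 * Real.pi * dotR y' t : ℝ) : ℂ) * Complex.I) := by
    have := DFunLike.congr_fun hyy' (Multiplicative.ofAdd t)
    simpa [charHom] using this
  have h2 : Complex.exp (((Real.pi / 2 : ℝ) : ℂ) * Complex.I) = 1 := by
    have hsub : dotR y t - dotR y' t = 1 / 4 := by
      rw [← dotR_sub_left]; exact hdt
    have : (((2 * Real.pi * dotR y t : ℝ) : ℂ) * Complex.I)
        - (((2 * Real.pi * dotR y' t : ℝ) : ℂ) * Complex.I)
        = ((Real.pi / 2 : ℝ) : ℂ) * Complex.I := by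
      have : (2 : ℝ) * Real.pi * dotR y t - 2 * Real.pi * dotR y' t = Real.pi / 2 := by
        rw [show (2:ℝ) * Real.pi * dotR y t - 2 * Real.pi * dotR y' t
            = 2 * Real.pi * (dotR y t - dotR y' t) by ring, hsub]
        ring
      push_cast [← this]
      ring
    rw [← this, Complex.exp_sub, h1, div_self (Complex.exp_ne_zero _)]
  have h3 : Complex.exp (((Real.pi / 2 : ℝ) : ℂ) * Complex.I) = Complex.I := by
    rw [Complex.exp_mul_I]
    rw [show ((Real.pi / 2 : ℝ) : ℂ) = ((Real.pi / 2 : ℝ) : ℂ) from rfl]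
    rw [← Complex.ofReal_cos, ← Complex.ofReal_sin]
    simp [Real.cos_pi_div_two, Real.sin_pi_div_two]
  rw [h3] at h2
  rw [Complex.ext_iff] at h2
  simp at h2

lemma coeFn_sum_TFS (c : (RV n × RV n) →₀ ℂ) (s : Finset (RV n × RV n)) (f : L2 n)
    (fc : RV n → ℂ) (hfc : ⇑f =ᵐ[(volume : Measure (RV n))] fc) :
    ⇑(∑ g ∈ s, c g • TFSp g f) =ᵐ[(volume : Measure (RV n))]
      fun t => ∑ g ∈ s, c g * tfsFun g.1 g.2 fc t := by
  classical
  induction s using Finset.induction_on with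
  | empty => simp only [Finset.sum_empty]; exact Lp.coeFn_zero ℂ 2 (volume : Measure (RV n))
  | @insert a s hx ih =>
    rw [Finset.sum_insert hx]
    have h1 := Lp.coeFn_add (c a • TFSp a f) (∑ g ∈ s, c g • TFSp g f)
    have h2 := Lp.coeFn_smul (c a) (TFSp a f)
    have h3 : ⇑(TFSp a f) =ᵐ[(volume : Measure (RV n))] tfsFun a.1 a.2 (⇑f) :=
      TFS_coeFn a.1 a.2 f
    have h4 := tfsFun_congr a.1 a.2 hfc
    filter_upwards [h1, h2, h3, h4, ih] with t e1 e2 e3 e4 e5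
    rw [e1, Pi.add_apply, e2, Pi.smul_apply, e5, Finset.sum_insert hx]
    congr 1
    rw [smul_eq_mul, e3, e4]

lemma key_ae (c : (RV n × RV n) →₀ ℂ)
    (h : (c.sum fun g a => a • TFSp g) = 0) (f : L2 n) (fc : RV n → ℂ)
    (hfc : ⇑f =ᵐ[(volume : Measure (RV n))] fc) :
    ∀ᵐ t ∂(volume : Measure (RV n)),
      ∑ g ∈ c.support, c g * tfsFun g.1 g.2 fc t = 0 := by
  have h0 : (∑ g ∈ c.support, c g • TFSp g f) = 0 := by
    have h2 : (∑ g ∈ c.support, c g • TFSp g) f = 0 := by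
      rw [Finsupp.sum] at h; rw [h]; simp
    rw [ContinuousLinearMap.sum_apply] at h2
    simpa only [ContinuousLinearMap.smul_apply] using h2
  have h1 := coeFn_sum_TFS c c.support f fc hfc
  rw [h0] at h1
  filter_upwards [h1, Lp.coeFn_zero ℂ 2 (volume : Measure (RV n))] with t e1 e2
  simpa using e1.symm.trans e2

lemma exists_sep (s : Finset (RV n)) (x₀ : RV n) :
    ∃ ε > (0:ℝ), ∀ x ∈ s, x ≠ x₀ → 2 * ε ≤ dist x x₀ := by
  classical
  set D : Finset ℝ := insert 1 ((s.filter (· ≠ x₀)).image (fun x => dist x x₀)) with hD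
  have hDne : D.Nonempty := ⟨1, Finset.mem_insert_self _ _⟩
  refine ⟨D.min' hDne / 2, ?_, ?_⟩
  · have hmem := D.min'_mem hDne
    rcases Finset.mem_insert.mp hmem with h1 | h1
    · linarith
    · obtain ⟨x, hx, hdx⟩ := Finset.mem_image.mp h1
      have hxne : x ≠ x₀ := (Finset.mem_filter.mp hx).2
      have : 0 < dist x x₀ := dist_pos.mpr hxne
      rw [hdx] at this
      linarith
  · intro x hx hxne
    have hmem : dist x x₀ ∈ D :=
      Finset.mem_insert.mpr (Or.inr (Finset.mem_image.mpr ⟨x, Finset.mem_filter.mpr ⟨hx, hxne⟩, rfl⟩))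
    have := D.min'_le _ hmem
    linarith

end Statement4Aux

/-- The family of operators `(π(x,y))_{(x,y) ∈ ℝ²ⁿ}` is linearly independent:
if `c` is finitely supported and `Σ c(x,y) • π(x,y) = 0`, then `c = 0`. -/
theorem statement4 (n : ℕ) (hn : 0 < n) (c : (RV n × RV n) →₀ ℂ)
    (h : (c.sum fun g a => a • TFSp g) = 0) : c = 0 := by
  classical
  open Statement4Aux Metric in
  ext g₀
  rw [Finsupp.coe_zero, Pi.zero_apply]
  by_cases hg₀ : g₀ ∈ c.support
  case neg => exact Finsupp.notMem_support_iff.mp hg₀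
  set x₀ := g₀.1 with hx₀
  set T : Finset (RV n × RV n) := c.support.filter (fun g => g.1 = x₀) with hT
  obtain ⟨ε, hε, hsep⟩ := exists_sep (c.support.image Prod.fst) x₀
  set F : RV n → ℂ := fun t => ∑ g ∈ T, c g *
      Complex.exp (((2 * Real.pi * dotR g.2 t : ℝ) : ℂ) * Complex.I) with hF
  have hFcont : Continuous F := by
    apply continuous_finset_sum
    intro g _
    apply continuous_const.mul
    have : Continuous fun t : RV n =>
        Complex.exp (((2 * Real.pi * dotR g.2 t : ℝ) : ℂ) * Complex.I) := by
      unfold dotR; fun_prop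
    exact this
  -- For every `p`, `F` vanishes a.e. on the ball `B(p - x₀, ε)`.
  have hball : ∀ p : RV n, ∀ᵐ t ∂(volume : Measure (RV n)),
      t ∈ Metric.ball (p - x₀) ε → F t = 0 := by
    intro p
    have hμ : (volume : Measure (RV n)) (Metric.ball p ε) ≠ ⊤ :=
      measure_ball_lt_top.ne
    set f : L2 n := indicatorConstLp 2 measurableSet_ball hμ (1 : ℂ) with hf
    have hfc : ⇑f =ᵐ[(volume : Measure (RV n))]
        (Metric.ball p ε).indicator (fun _ => (1:ℂ)) := indicatorConstLp_coeFn
    filter_upwards [key_ae c h f _ hfc] with t ht hmem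
    have hterm : ∀ g ∈ c.support,
        c g * tfsFun g.1 g.2 ((Metric.ball p ε).indicator (fun _ => (1:ℂ))) t
          = if g.1 = x₀ then c g *
              Complex.exp (((2 * Real.pi * dotR g.2 t : ℝ) : ℂ) * Complex.I) else 0 := by
      intro g hg
      by_cases hgx : g.1 = x₀
      · rw [if_pos hgx]
        have hin : t + g.1 ∈ Metric.ball p ε := by
          rw [Metric.mem_ball, hgx, Statement4Aux.dist_shift]
          exact hmem
        rw [tfsFun, Set.indicator_of_mem hin, mul_one]
      · rw [if_neg hgx]
        have hout : t + g.1 ∉ Metric.ball p ε := by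
          intro hcon
          rw [Metric.mem_ball] at hcon
          have h1 : dist (t + g.1) p = dist t (p - g.1) := Statement4Aux.dist_shift t p g.1
          have h2 : dist g.1 x₀ ≤ dist t (p - g.1) + dist t (p - x₀) := by
            have h3 := dist_triangle (p - g.1) t (p - x₀)
            have he : dist (p - g.1) (p - x₀) = dist g.1 x₀ := Statement4Aux.dist_sub_sub p g.1 x₀
            rw [dist_comm (p - g.1) t] at h3
            linarith [he ▸ h3]
          have h3 : 2 * ε ≤ dist g.1 x₀ :=
            hsep g.1 (Finset.mem_image_of_mem Prod.fst hg) hgx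
          rw [h1] at hcon
          have hmem' : dist t (p - x₀) < ε := hmem
          linarith
        rw [tfsFun, Set.indicator_of_notMem hout, mul_zero, mul_zero]
    rw [hF]
    calc ∑ g ∈ T, c g * Complex.exp (((2 * Real.pi * dotR g.2 t : ℝ) : ℂ) * Complex.I)
        = ∑ g ∈ c.support, (if g.1 = x₀ then c g *
            Complex.exp (((2 * Real.pi * dotR g.2 t : ℝ) : ℂ) * Complex.I) else 0) := by
          rw [hT, Finset.sum_filter]
      _ = ∑ g ∈ c.support,
            c g * tfsFun g.1 g.2 ((Metric.ball p ε).indicator (fun _ => (1:ℂ))) t :=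
          (Finset.sum_congr rfl hterm).symm
      _ = 0 := ht
  -- Hence `F = 0` a.e., hence everywhere by continuity.
  have hFae : F =ᵐ[(volume : Measure (RV n))] 0 := by
    obtain ⟨D, hDc, hDd⟩ := TopologicalSpace.exists_countable_dense (RV n)
    rw [Filter.eventuallyEq_iff_exists_mem]
    have hnull : (volume : Measure (RV n)) (⋃ p ∈ D, {t | F t ≠ 0} ∩ Metric.ball (p - x₀) ε) = 0 := by
      rw [measure_biUnion_null_iff hDc]
      intro p _
      have := hball p
      rw [MeasureTheory.ae_iff] at this
      refine measure_mono_null ?_ this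
      intro t ⟨ht1, ht2⟩
      simp only [Set.mem_setOf_eq, not_forall]
      exact ⟨ht2, ht1⟩
    refine ⟨{t | F t = 0}, ?_, fun t ht => ht⟩
    rw [MeasureTheory.mem_ae_iff]
    refine measure_mono_null ?_ hnull
    intro t ht
    have htne : F t ≠ 0 := ht
    obtain ⟨p, hpD, hp⟩ := hDd.exists_dist_lt (t + x₀) hε
    refine Set.mem_biUnion hpD ⟨htne, ?_⟩
    rw [Metric.mem_ball, ← Statement4Aux.dist_shift]
    exact hp
  have hF0 : F = 0 := (Continuous.ae_eq_iff_eq volume hFcont continuous_const).mp hFae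
  -- Linear independence of characters.
  have hli : LinearIndependent ℂ (fun y : RV n => ⇑(charHom (n := n) y)) :=
    (linearIndependent_monoidHom (Multiplicative (RV n)) ℂ).comp charHom charHom_injective
  set Y : Finset (RV n) := T.image Prod.snd with hY
  have hsum : ∑ y ∈ Y, c (x₀, y) • ⇑(charHom (n := n) y) = 0 := by
    funext s
    rw [Pi.zero_apply]
    have hinj : ∀ g ∈ T, ∀ g' ∈ T, g.2 = g'.2 → g = g' := by
      intro g hg g' hg' h22
      have h1 : g.1 = x₀ := (Finset.mem_filter.mp hg).2
      have h2 : g'.1 = x₀ := (Finset.mem_filter.mp hg').2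
      exact Prod.ext (h1.trans h2.symm) h22
    rw [Finset.sum_apply, hY, Finset.sum_image hinj]
    have hre : ∀ g ∈ T, (c (x₀, g.2) • ⇑(charHom (n := n) g.2)) s
        = c g * Complex.exp (((2 * Real.pi * dotR g.2 (Multiplicative.toAdd s) : ℝ) : ℂ)
            * Complex.I) := by
      intro g hg
      have h1 : g.1 = x₀ := (Finset.mem_filter.mp hg).2
      have h2 : (x₀, g.2) = g := by rw [← h1]
      rw [h2, Pi.smul_apply, smul_eq_mul]
      rfl
    rw [Finset.sum_congr rfl hre]
    have := congrFun hF0 (Multiplicative.toAdd s)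
    rw [Pi.zero_apply] at this
    exact this
  have hg₀T : g₀ ∈ T := Finset.mem_filter.mpr ⟨hg₀, rfl⟩
  have hg₀Y : g₀.2 ∈ Y := Finset.mem_image_of_mem Prod.snd hg₀T
  have hzero := linearIndependent_iff'.mp hli Y (fun y => c (x₀, y)) hsum g₀.2 hg₀Y
  simpa [hx₀] using hzero


end
end

section
/- Let n be a positive integer and let G be any subgroup of ℝ^{2n}. If I and J are nonzero left ideals of the ring ℂ*G, then I ∩ J ≠ 0. In particular, for any nonzero α, β ∈ ℂ*G there exist γ, δ ∈ ℂ*G such that γα = δβ ≠ 0 (the left Ore condition). -/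
set_option maxHeartbeats 1000000
set_option synthInstance.maxHeartbeats 1000000

open MeasureTheory Complex

noncomputable section

/-! ### Linear independence of time-frequency shifts -/

lemma Lp_coeFn_sum {n : ℕ} {ι : Type*} (s : Finset ι) (f : ι → L2 n) :
    ((∑ i ∈ s, f i : L2 n) : RV n → ℂ)
      =ᵐ[(volume : Measure (RV n))] fun t => ∑ i ∈ s, (f i : RV n → ℂ) t := by
  classical
  induction s using Finset.cons_induction with
  | empty =>
    filter_upwards [Lp.coeFn_zero ℂ 2 (volume : Measure (RV n))] with t ht
    simpa using ht
  | cons i s his ih =>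
    filter_upwards [Lp.coeFn_add (f i) (∑ j ∈ s, f j), ih] with t h1 h2
    rw [Finset.sum_cons, h1, Pi.add_apply, h2, Finset.sum_cons]

/-- The character `t ↦ e^{2πi y·t}` as a monoid hom on `Multiplicative ℝⁿ`. -/
def charFun {n : ℕ} (y : RV n) : Multiplicative (RV n) →* ℂ where
  toFun t := Complex.exp (((2 * Real.pi * dotR y (Multiplicative.toAdd t) : ℝ) : ℂ) * Complex.I)
  map_one' := by
    show Complex.exp (((2 * Real.pi *
        dotR y (Multiplicative.toAdd (1 : Multiplicative (RV n))) : ℝ) : ℂ) * Complex.I) = 1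
    have h : dotR y (Multiplicative.toAdd (1 : Multiplicative (RV n))) = 0 := by
      show dotR y 0 = 0
      simp [dotR]
    rw [h]
    simp
  map_mul' s t := by
    rw [← Complex.exp_add]
    congr 1
    have h : Multiplicative.toAdd (s * t)
        = Multiplicative.toAdd s + Multiplicative.toAdd t := rfl
    rw [h, dotR_add_right]
    push_cast
    ring

lemma charFun_injective {n : ℕ} : Function.Injective (charFun (n := n)) := by
  intro y y' h
  have key : ∀ t : RV n,
      Complex.exp (((2 * Real.pi * dotR y t : ℝ) : ℂ) * Complex.I)
        = Complex.exp (((2 * Real.pi * dotR y' t : ℝ) : ℂ) * Complex.I) := by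
    intro t
    exact congrFun (congrArg (fun (f : Multiplicative (RV n) →* ℂ) =>
      (f : Multiplicative (RV n) → ℂ)) h) (Multiplicative.ofAdd t)
  funext i
  by_contra hne
  set d : ℝ := y i - y' i with hd
  have hd0 : d ≠ 0 := sub_ne_zero.mpr hne
  set s : ℝ := 1 / (4 * d) with hs
  set t : RV n := fun j => if j = i then s else 0 with ht
  have hdot : ∀ z : RV n, dotR z t = z i * s := by
    intro z
    rw [dotR]
    rw [Finset.sum_eq_single i]
    · rw [ht]; simp
    · intro j _ hj
      rw [ht]; simp [hj]
    · intro habs; exact absurd (Finset.mem_univ i) habs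
  have hk := key t
  rw [hdot, hdot] at hk
  have hquot : Complex.exp ((((2 * Real.pi * (y i * s) : ℝ) : ℂ) * Complex.I)
      - (((2 * Real.pi * (y' i * s) : ℝ) : ℂ) * Complex.I)) = 1 := by
    rw [Complex.exp_sub, hk, div_self (Complex.exp_ne_zero _)]
  have harg : (((2 * Real.pi * (y i * s) : ℝ) : ℂ) * Complex.I)
      - (((2 * Real.pi * (y' i * s) : ℝ) : ℂ) * Complex.I)
      = ((Real.pi / 2 : ℝ) : ℂ) * Complex.I := by
    rw [← sub_mul]
    congr 1
    rw [← Complex.ofReal_sub]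
    congr 1
    have hds : d * s = 1/4 := by
      rw [hs]
      field_simp
    have he : 2 * Real.pi * (y i * s) - 2 * Real.pi * (y' i * s)
        = 2 * Real.pi * (d * s) := by
      rw [hd]; ring
    rw [he, hds]
    ring
  rw [harg] at hquot
  have : Complex.exp (((Real.pi / 2 : ℝ) : ℂ) * Complex.I) = Complex.I := by
    rw [Complex.exp_mul_I]
    push_cast
    rw [Complex.cos_pi_div_two, Complex.sin_pi_div_two]
    ring
  rw [this] at hquot
  have hI1 : (Complex.I : ℂ) ≠ 1 := by
    intro hi
    have h2 := congrArg (fun z : ℂ => z * z) hi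
    simp only [Complex.I_mul_I, one_mul] at h2
    norm_num at h2
  exact hI1 hquot

lemma linIndep_TFSp {n : ℕ} (hn : 0 < n) :
    LinearIndependent ℂ (TFSp (n := n)) := by
  classical
  rw [linearIndependent_iff']
  intro F c hsum g₀ hg₀
  -- Step 1: the pointwise a.e. identity, for every `f ∈ L²`.
  have hptwise : ∀ f : L2 n, ∀ᵐ t ∂(volume : Measure (RV n)),
      ∑ g ∈ F, c g * (Complex.exp (((2 * Real.pi * dotR g.2 t : ℝ) : ℂ) * Complex.I) *
        (f : RV n → ℂ) (t + g.1)) = 0 := by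
    intro f
    have e1 : (∑ g ∈ F, c g • TFSp g) f = ∑ g ∈ F, c g • (TFSp g f) := by
      rw [ContinuousLinearMap.sum_apply]
      exact Finset.sum_congr rfl fun g _ => rfl
    have h0 : ((∑ g ∈ F, c g • TFSp g) f : RV n → ℂ) =ᵐ[(volume : Measure (RV n))] 0 := by
      rw [hsum]
      have : ((0 : L2 n →L[ℂ] L2 n) f) = (0 : L2 n) := rfl
      rw [this]
      exact Lp.coeFn_zero ℂ 2 volume
    have hterm : ∀ g ∈ F, ((c g • (TFSp g f) : L2 n) : RV n → ℂ)
        =ᵐ[(volume : Measure (RV n))]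
          fun t => c g * (Complex.exp (((2 * Real.pi * dotR g.2 t : ℝ) : ℂ) * Complex.I) *
            (f : RV n → ℂ) (t + g.1)) := by
      intro g hg
      have hb0 : ((TFSp g f : L2 n) : RV n → ℂ) =ᵐ[(volume : Measure (RV n))]
          tfsFun g.1 g.2 ((f : RV n → ℂ)) := TFS_coeFn g.1 g.2 f
      filter_upwards [Lp.coeFn_smul (c g) (TFSp g f), hb0] with t ha hb
      rw [ha, Pi.smul_apply, hb]
      rfl
    have hall := (Filter.eventually_all_finset F).mpr hterm
    rw [e1] at h0
    filter_upwards [Lp_coeFn_sum F (fun g => c g • TFSp g f), h0, hall] with t h1 h2 h3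
    rw [h1] at h2
    rw [Pi.zero_apply] at h2
    rw [← h2]
    exact (Finset.sum_congr rfl fun g hg => (h3 g hg)).symm
  set x₀ := g₀.1 with hx₀
  -- Step 2: a separation radius.
  have hsep : ∃ ε : ℝ, 0 < ε ∧ ∀ x ∈ F.image Prod.fst, x ≠ x₀ → 2 * ε ≤ dist x x₀ := by
    set D := (F.image Prod.fst).filter (fun x => x ≠ x₀) with hD
    rcases D.eq_empty_or_nonempty with hDe | hDn
    · refine ⟨1, one_pos, fun x hx hne => ?_⟩
      exact absurd (hDe ▸ Finset.mem_filter.mpr ⟨hx, hne⟩) (Finset.notMem_empty x)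
    · obtain ⟨x₁, hx₁, hmin⟩ := D.exists_min_image (fun x => dist x x₀) hDn
      have hx₁ne : x₁ ≠ x₀ := (Finset.mem_filter.mp hx₁).2
      have hpos : 0 < dist x₁ x₀ := dist_pos.mpr hx₁ne
      refine ⟨dist x₁ x₀ / 4, by linarith, fun x hx hne => ?_⟩
      have := hmin x (Finset.mem_filter.mpr ⟨hx, hne⟩)
      linarith
  obtain ⟨ε, hε, hsepε⟩ := hsep
  set F' := F.filter (fun g => g.1 = x₀) with hF'
  set P : RV n → ℂ := fun t => ∑ g ∈ F',
    c g * Complex.exp (((2 * Real.pi * dotR g.2 t : ℝ) : ℂ) * Complex.I) with hP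
  -- Step 3: P vanishes a.e. on every ball of radius ε.
  have hball : ∀ q : RV n, ∀ᵐ t ∂(volume : Measure (RV n)),
      t ∈ Metric.ball q ε → P t = 0 := by
    intro q
    have hμb : (volume : Measure (RV n)) (Metric.ball (q + x₀) ε) ≠ ⊤ :=
      measure_ball_lt_top.ne
    set f : L2 n := indicatorConstLp 2 (measurableSet_ball (x := q + x₀) (ε := ε)) hμb (1:ℂ)
      with hf
    have hind : ∀ g ∈ F, ∀ᵐ t ∂(volume : Measure (RV n)),
        (f : RV n → ℂ) (t + g.1)
          = (Metric.ball (q + x₀) ε).indicator (fun _ => (1:ℂ)) (t + g.1) := by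
      intro g hg
      have h := indicatorConstLp_coeFn (p := 2) (μ := (volume : Measure (RV n)))
        (hs := measurableSet_ball (x := q + x₀) (ε := ε)) (hμs := hμb) (c := (1:ℂ))
      have hmp : MeasurePreserving (fun t : RV n => t + g.1) volume volume :=
        measurePreserving_add_right volume g.1
      have h2 := hmp.quasiMeasurePreserving.ae_eq_comp h
      filter_upwards [h2] with t ht
      exact ht
    filter_upwards [hptwise f, (Filter.eventually_all_finset F).mpr hind] with t h1 h2 htq
    have h3 : ∑ g ∈ F, c g * (Complex.exp (((2 * Real.pi * dotR g.2 t : ℝ) : ℂ) * Complex.I) *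
        (Metric.ball (q + x₀) ε).indicator (fun _ => (1:ℂ)) (t + g.1)) = 0 := by
      rw [← h1]
      exact (Finset.sum_congr rfl fun g hg => by rw [h2 g hg]).symm
    have hsplit := Finset.sum_filter_add_sum_filter_not F (fun g => g.1 = x₀)
      (fun g => c g * (Complex.exp (((2 * Real.pi * dotR g.2 t : ℝ) : ℂ) * Complex.I) *
        (Metric.ball (q + x₀) ε).indicator (fun _ => (1:ℂ)) (t + g.1)))
    have hz : ∑ g ∈ F.filter (fun g => ¬ g.1 = x₀),
        c g * (Complex.exp (((2 * Real.pi * dotR g.2 t : ℝ) : ℂ) * Complex.I) *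
          (Metric.ball (q + x₀) ε).indicator (fun _ => (1:ℂ)) (t + g.1)) = 0 := by
      refine Finset.sum_eq_zero fun g hg => ?_
      obtain ⟨hgF, hgx⟩ := Finset.mem_filter.mp hg
      have hnotin : t + g.1 ∉ Metric.ball (q + x₀) ε := by
        intro hmem
        rw [Metric.mem_ball] at hmem htq
        have hd := hsepε g.1 (Finset.mem_image_of_mem Prod.fst hgF) hgx
        have e1 : dist g.1 x₀ = dist (t + g.1) (t + x₀) := (dist_add_left t g.1 x₀).symm
        have e2 : dist (t + g.1) (t + x₀)
            ≤ dist (t + g.1) (q + x₀) + dist (q + x₀) (t + x₀) := dist_triangle _ _ _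
        have e3 : dist (q + x₀) (t + x₀) = dist q t := dist_add_right q t x₀
        have e4 : dist q t = dist t q := dist_comm q t
        linarith
      rw [Set.indicator_of_notMem hnotin]
      ring
    have ho : ∑ g ∈ F.filter (fun g => g.1 = x₀),
        c g * (Complex.exp (((2 * Real.pi * dotR g.2 t : ℝ) : ℂ) * Complex.I) *
          (Metric.ball (q + x₀) ε).indicator (fun _ => (1:ℂ)) (t + g.1)) = P t := by
      refine Finset.sum_congr rfl fun g hg => ?_
      obtain ⟨hgF, hgx⟩ := Finset.mem_filter.mp hg
      have hin : t + g.1 ∈ Metric.ball (q + x₀) ε := by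
        rw [Metric.mem_ball] at htq ⊢
        rw [hgx]
        have e1 : dist (t + x₀) (q + x₀) = dist t q := dist_add_right t q x₀
        linarith
      rw [Set.indicator_of_mem hin]
      ring
    rw [hz, add_zero, ho] at hsplit
    rw [hsplit]
    exact h3
  -- Step 4: P vanishes a.e. globally, hence everywhere.
  have hPae : P =ᵐ[(volume : Measure (RV n))] 0 := by
    obtain ⟨D, hDc, hDd⟩ := TopologicalSpace.exists_countable_dense (RV n)
    rw [Filter.EventuallyEq, ae_iff]
    have hsub : {t | ¬ P t = (0 : RV n → ℂ) t}
        ⊆ ⋃ q ∈ D, {t | t ∈ Metric.ball q ε ∧ ¬ P t = 0} := by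
      intro t ht
      have htc := hDd t
      rw [Metric.mem_closure_iff] at htc
      obtain ⟨q, hqD, hqd⟩ := htc ε hε
      refine Set.mem_iUnion₂.mpr ⟨q, hqD, ?_, ht⟩
      rw [Metric.mem_ball]
      exact hqd
    refine measure_mono_null hsub ?_
    refine (measure_biUnion_null_iff hDc).mpr fun q hq => ?_
    have := hball q
    rw [ae_iff] at this
    convert this using 2
    ext t
    simp only [Set.mem_setOf_eq]
    tauto
  have hPcont : Continuous P := by
    refine continuous_finset_sum F' fun g hg => ?_
    refine continuous_const.mul ?_
    refine Complex.continuous_exp.comp ?_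
    have : Continuous fun t : RV n => ((2 * Real.pi * dotR g.2 t : ℝ) : ℂ) := by
      unfold dotR
      fun_prop
    exact this.mul continuous_const
  have hPzero : P = 0 := (Continuous.ae_eq_iff_eq volume hPcont continuous_zero).mp hPae
  -- Step 5: linear independence of characters.
  have hg₀F' : g₀ ∈ F' := Finset.mem_filter.mpr ⟨hg₀, rfl⟩
  have hinj2 : Function.Injective
      (fun g : ↥F' => charFun ((g : RV n × RV n).2)) := by
    intro g g' h
    have h2 := charFun_injective h
    apply Subtype.ext
    have hx : (g : RV n × RV n).1 = x₀ := (Finset.mem_filter.mp g.2).2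
    have hx' : (g' : RV n × RV n).1 = x₀ := (Finset.mem_filter.mp g'.2).2
    exact Prod.ext (hx.trans hx'.symm) h2
  have hli := (linearIndependent_monoidHom (Multiplicative (RV n)) ℂ).comp
    (fun g : ↥F' => charFun ((g : RV n × RV n).2)) hinj2
  have hzero : ∑ g ∈ (Finset.univ : Finset ↥F'),
      (fun g : ↥F' => c (g : RV n × RV n)) g •
        (fun u => charFun ((g : RV n × RV n).2) u) = (0 : Multiplicative (RV n) → ℂ) := by
    funext u
    have hPu := congrFun hPzero (Multiplicative.toAdd u)
    rw [hP] at hPu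
    simp only [Pi.zero_apply] at hPu
    simp only [Finset.sum_apply, Pi.smul_apply, smul_eq_mul, Pi.zero_apply]
    rw [← hPu]
    exact Finset.sum_coe_sort F' (fun g => c g * charFun g.2 u)
  have hall := linearIndependent_iff'.mp hli Finset.univ
    (fun g : ↥F' => c (g : RV n × RV n)) hzero
  exact hall ⟨g₀, hg₀F'⟩ (Finset.mem_univ _)



/-! ### The twisted group algebra structure -/

/-- The cocycle `u(g,h) = e^{2πi g₁·h₂}`. -/
def twist {n : ℕ} (g h : RV n × RV n) : ℂ :=
  Complex.exp (((2 * Real.pi * dotR g.1 h.2 : ℝ) : ℂ) * Complex.I)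

lemma twist_ne_zero {n : ℕ} (g h : RV n × RV n) : twist g h ≠ 0 :=
  Complex.exp_ne_zero _

/-- The linear map sending a finitely supported coefficient function to the corresponding
combination of time-frequency shifts. -/
def Phi (n : ℕ) : ((RV n × RV n) →₀ ℂ) →ₗ[ℂ] (L2 n →L[ℂ] L2 n) :=
  Finsupp.linearCombination ℂ TFSp

lemma Phi_single {n : ℕ} (g : RV n × RV n) (c : ℂ) :
    Phi n (Finsupp.single g c) = c • TFSp g :=
  Finsupp.linearCombination_single ℂ c g

lemma Phi_injective {n : ℕ} (hn : 0 < n) : Function.Injective (Phi n) := by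
  intro x y hxy
  have h0 : Phi n (x - y) = 0 := by rw [map_sub, hxy, sub_self]
  have := linearIndependent_iff.mp (linIndep_TFSp hn) (x - y) h0
  exact sub_eq_zero.mp this

/-- Twisted convolution of coefficient functions, matching multiplication of the
corresponding operators. -/
def tconv {n : ℕ} (c d : (RV n × RV n) →₀ ℂ) : (RV n × RV n) →₀ ℂ :=
  c.sum fun g a => d.sum fun h b => Finsupp.single (g + h) (a * b * twist g h)

open Pointwise in
lemma support_tconv {n : ℕ} (c d : (RV n × RV n) →₀ ℂ) :
    ((tconv c d).support : Set (RV n × RV n)) ⊆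
      ((c.support : Set (RV n × RV n)) + (d.support : Set (RV n × RV n))) := by
  classical
  intro k hk
  have h1 := Finsupp.support_sum (Finset.mem_coe.mp hk)
  obtain ⟨g, hg, hk1⟩ := Finset.mem_biUnion.mp h1
  have h2 := Finsupp.support_sum hk1
  obtain ⟨h, hh, hk2⟩ := Finset.mem_biUnion.mp h2
  have h3 := Finsupp.support_single_subset hk2
  rw [Finset.mem_singleton] at h3
  exact ⟨g, Finset.mem_coe.mpr hg, h, Finset.mem_coe.mpr hh, h3.symm⟩

lemma Phi_tconv {n : ℕ} (c d : (RV n × RV n) →₀ ℂ) :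
    Phi n (tconv c d) = Phi n c * Phi n d := by
  rw [tconv, map_finsuppSum]
  simp only [map_finsuppSum, Phi_single]
  rw [Phi, Finsupp.linearCombination_apply, Finsupp.linearCombination_apply]
  rw [Finsupp.sum, Finsupp.sum, Finset.sum_mul]
  refine Finset.sum_congr rfl fun g hg => ?_
  rw [Finsupp.sum, Finsupp.sum, Finset.mul_sum]
  refine Finset.sum_congr rfl fun h hh => ?_
  rw [smul_mul_assoc, mul_smul_comm, TFSp_mul, smul_smul, smul_smul]
  show (c g * d h * twist g h) • TFSp (g + h) = _
  rw [twist, mul_assoc]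

lemma tconv_apply {n : ℕ} (c d : (RV n × RV n) →₀ ℂ) (k : RV n × RV n) :
    tconv c d k = ∑ g ∈ c.support, ∑ h ∈ d.support,
      (if g + h = k then c g * d h * twist g h else 0) := by
  classical
  rw [tconv, Finsupp.sum_apply, Finsupp.sum]
  refine Finset.sum_congr rfl fun g hg => ?_
  rw [Finsupp.sum_apply, Finsupp.sum]
  refine Finset.sum_congr rfl fun h hh => ?_
  rw [Finsupp.single_apply]

/-! ### A linear functional injective on a finite set -/

/-- Pairing against a fixed vector, as a linear functional on `ℝ²ⁿ`. -/
def dotFunc {n : ℕ} (v : RV n × RV n) : (RV n × RV n) →ₗ[ℝ] ℝ where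
  toFun w := dotR v.1 w.1 + dotR v.2 w.2
  map_add' w₁ w₂ := by
    show dotR v.1 (w₁.1 + w₂.1) + dotR v.2 (w₁.2 + w₂.2) = _
    rw [dotR_add_right, dotR_add_right]
    ring
  map_smul' r w := by
    show dotR v.1 (r • w.1) + dotR v.2 (r • w.2) = r * (dotR v.1 w.1 + dotR v.2 w.2)
    simp only [dotR, Pi.smul_apply, smul_eq_mul, Finset.mul_sum, mul_add]
    congr 1 <;> exact Finset.sum_congr rfl fun i _ => by ring

lemma dotFunc_self_eq_zero {n : ℕ} {v : RV n × RV n} (hv : dotFunc v v = 0) : v = 0 := by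
  have h1 : dotR v.1 v.1 + dotR v.2 v.2 = 0 := hv
  have hA : (0:ℝ) ≤ dotR v.1 v.1 := Finset.sum_nonneg fun i _ => mul_self_nonneg _
  have hB : (0:ℝ) ≤ dotR v.2 v.2 := Finset.sum_nonneg fun i _ => mul_self_nonneg _
  have hA0 : dotR v.1 v.1 = 0 := by linarith
  have hB0 : dotR v.2 v.2 = 0 := by linarith
  have h2 := (Finset.sum_eq_zero_iff_of_nonneg
    (fun i _ => mul_self_nonneg (v.1 i))).mp hA0
  have h3 := (Finset.sum_eq_zero_iff_of_nonneg
    (fun i _ => mul_self_nonneg (v.2 i))).mp hB0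
  have e1 : v.1 = 0 := funext fun i => mul_self_eq_zero.mp (h2 i (Finset.mem_univ i))
  have e2 : v.2 = 0 := funext fun i => mul_self_eq_zero.mp (h3 i (Finset.mem_univ i))
  exact Prod.ext e1 e2

lemma exists_functional_ne {n : ℕ} (N : Finset (RV n × RV n)) (hN : (0 : RV n × RV n) ∉ N) :
    ∃ φ : (RV n × RV n) →ₗ[ℝ] ℝ, ∀ v ∈ N, φ v ≠ 0 := by
  classical
  induction N using Finset.induction_on with
  | empty => exact ⟨0, fun v hv => absurd hv (Finset.notMem_empty v)⟩
  | @insert w N hw ih =>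
    obtain ⟨φ, hφ⟩ := ih (fun h => hN (Finset.mem_insert_of_mem h))
    have hw0 : w ≠ 0 := fun h => hN (h ▸ Finset.mem_insert_self w N)
    set ψ := dotFunc w with hψ
    have hψw : ψ w ≠ 0 := fun h => hw0 (dotFunc_self_eq_zero h)
    obtain ⟨ε, hε⟩ := Infinite.exists_notMem_finset
      ((insert w N).image fun v => -(φ v) / ψ v)
    refine ⟨φ + ε • ψ, fun v hv => ?_⟩
    have hvb : -(φ v) / ψ v ≠ ε := fun h => hε (h ▸ Finset.mem_image_of_mem _ hv)
    simp only [LinearMap.add_apply, LinearMap.smul_apply, smul_eq_mul]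
    rcases eq_or_ne (ψ v) 0 with h0 | h0
    · rcases Finset.mem_insert.mp hv with rfl | hvN
      · exact absurd h0 hψw
      · rw [h0, mul_zero, add_zero]; exact hφ v hvN
    · intro hcontra
      exact hvb (by rw [div_eq_iff h0]; linarith)

lemma exists_functional_injOn {n : ℕ} (s : Finset (RV n × RV n)) :
    ∃ φ : (RV n × RV n) →ₗ[ℝ] ℝ, Set.InjOn φ ↑s := by
  classical
  obtain ⟨φ, hφ⟩ := exists_functional_ne (((s ×ˢ s).image fun p => p.1 - p.2).erase 0)
    (Finset.notMem_erase _ _)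
  refine ⟨φ, fun x hx y hy hxy => ?_⟩
  by_contra hne
  have hmem : x - y ∈ ((s ×ˢ s).image fun p => p.1 - p.2).erase 0 :=
    Finset.mem_erase.mpr ⟨sub_ne_zero.mpr hne,
      Finset.mem_image.mpr ⟨(x, y), Finset.mem_product.mpr ⟨hx, hy⟩, rfl⟩⟩
  exact hφ _ hmem (by rw [map_sub, hxy, sub_self])

/-! ### `ℂ*G` is a domain -/

lemma tconv_ne_zero {n : ℕ} {c d : (RV n × RV n) →₀ ℂ} (hc : c ≠ 0) (hd : d ≠ 0) :
    tconv c d ≠ 0 := by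
  classical
  obtain ⟨φ, hφ⟩ := exists_functional_injOn (c.support ∪ d.support)
  obtain ⟨g₀, hg₀, hg₀max⟩ := Finset.exists_max_image c.support φ
    (Finsupp.support_nonempty_iff.mpr hc)
  obtain ⟨h₀, hh₀, hh₀max⟩ := Finset.exists_max_image d.support φ
    (Finsupp.support_nonempty_iff.mpr hd)
  intro h0
  have hval : tconv c d (g₀ + h₀) = c g₀ * d h₀ * twist g₀ h₀ := by
    rw [tconv_apply]
    rw [Finset.sum_eq_single g₀]
    · rw [Finset.sum_eq_single h₀]
      · rw [if_pos rfl]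
      · intro h hh hne
        exact if_neg fun heq => hne (add_left_cancel heq)
      · intro habs; exact absurd hh₀ habs
    · intro g hg hne
      refine Finset.sum_eq_zero fun h hh => if_neg fun heq => ?_
      have h1 : φ g < φ g₀ := by
        refine lt_of_le_of_ne (hg₀max g hg) fun he => hne ?_
        exact hφ (Finset.mem_coe.mpr (Finset.mem_union_left _ hg))
          (Finset.mem_coe.mpr (Finset.mem_union_left _ hg₀)) he
      have h2 : φ h ≤ φ h₀ := hh₀max h hh
      have h3 := congrArg φ heq
      rw [map_add, map_add] at h3
      linarith
    · intro habs; exact absurd hg₀ habs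
  have hz : tconv c d (g₀ + h₀) = 0 := by rw [h0]; rfl
  rw [hval] at hz
  exact (mul_ne_zero (mul_ne_zero (Finsupp.mem_support_iff.mp hg₀)
    (Finsupp.mem_support_iff.mp hh₀)) (twist_ne_zero g₀ h₀)) hz

/-! ### Spans, ranks, and growth -/

lemma range_TFSp_subtype {n : ℕ} (s : Set (RV n × RV n)) :
    (Set.range fun g : s => TFSp (g : RV n × RV n)) = TFSp '' s := by
  rw [show (fun g : s => TFSp (g : RV n × RV n)) = TFSp ∘ Subtype.val from rfl,
    Set.range_comp, Subtype.range_coe]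

lemma spanTFS_eq (n : ℕ) (G : AddSubgroup (RV n × RV n)) :
    spanTFS n G = Submodule.span ℂ (TFSp '' (G : Set (RV n × RV n))) := by
  rw [spanTFS]
  congr 1
  ext x
  constructor
  · rintro ⟨g, rfl⟩; exact ⟨g, g.2, rfl⟩
  · rintro ⟨g, hg, rfl⟩; exact ⟨⟨g, hg⟩, rfl⟩

lemma Phi_mem_span {n : ℕ} {c : (RV n × RV n) →₀ ℂ} {s : Set (RV n × RV n)}
    (h : ↑c.support ⊆ s) : Phi n c ∈ Submodule.span ℂ (TFSp '' s) :=
  (Finsupp.mem_span_image_iff_linearCombination ℂ).mpr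
    ⟨c, (Finsupp.mem_supported ℂ c).mpr h, rfl⟩

lemma finiteDimensional_span_image {n : ℕ} (s : Finset (RV n × RV n)) :
    FiniteDimensional ℂ
      (Submodule.span ℂ (TFSp '' (s : Set (RV n × RV n)))) := by
  classical
  rw [← Finset.coe_image]
  infer_instance

lemma span_image_finrank {n : ℕ} (hn : 0 < n) (s : Finset (RV n × RV n)) :
    Module.finrank ℂ
      (Submodule.span ℂ (TFSp '' (s : Set (RV n × RV n)))) = s.card := by
  classical
  have hli : LinearIndependent ℂ
      (fun g : (s : Set (RV n × RV n)) => TFSp (g : RV n × RV n)) :=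
    (linIndep_TFSp hn).comp _ Subtype.val_injective
  rw [← range_TFSp_subtype (s : Set (RV n × RV n)), finrank_span_eq_card hli]
  simp

open Pointwise in
lemma nsmul_finset_zero_mem {α : Type*} [AddMonoid α] [DecidableEq α] {S : Finset α}
    (h0 : (0:α) ∈ S) : ∀ m : ℕ, (0:α) ∈ m • S := by
  intro m
  induction m with
  | zero => rw [zero_nsmul]; exact Finset.zero_mem_zero
  | succ m ih =>
    rw [succ_nsmul]
    simpa using Finset.add_mem_add ih h0

open Pointwise in
lemma nsmul_finset_subset_subgroup {n : ℕ} {G : AddSubgroup (RV n × RV n)}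
    {S : Finset (RV n × RV n)} [DecidableEq (RV n × RV n)]
    (hS : ↑S ⊆ (G : Set (RV n × RV n))) (m : ℕ) :
    ↑(m • S) ⊆ (G : Set (RV n × RV n)) := by
  induction m with
  | zero =>
    rw [zero_nsmul]
    intro x hx
    rw [Finset.mem_coe, Finset.mem_zero] at hx
    subst hx
    exact G.zero_mem
  | succ m ih =>
    rw [succ_nsmul]
    intro x hx
    rw [Finset.mem_coe, Finset.mem_add] at hx
    obtain ⟨y, hy, z, hz, rfl⟩ := hx
    exact G.add_mem (ih (Finset.mem_coe.mpr hy)) (hS (Finset.mem_coe.mpr hz))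

open Pointwise in
lemma card_nsmul_le {α : Type*} [AddCommMonoid α] [DecidableEq α] (S : Finset α) (m : ℕ) :
    (m • S).card ≤ (m+1) ^ S.card := by
  classical
  have key : ∀ m : ℕ, (m • S) ⊆ (Fintype.piFinset fun _ : S => Finset.range (m+1)).image
      (fun k => ∑ s : S, k s • (s : α)) := by
    intro m
    induction m with
    | zero =>
      rw [zero_nsmul]
      intro x hx
      rw [Finset.mem_zero] at hx
      subst hx
      refine Finset.mem_image.mpr ⟨fun _ => 0, ?_, by simp⟩
      rw [Fintype.mem_piFinset]
      intro s
      simp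
    | succ m ih =>
      rw [succ_nsmul]
      intro x hx
      rw [Finset.mem_add] at hx
      obtain ⟨y, hy, t, ht, rfl⟩ := hx
      obtain ⟨k, hk, rfl⟩ := Finset.mem_image.mp (ih hy)
      refine Finset.mem_image.mpr ⟨Function.update k ⟨t, ht⟩ (k ⟨t, ht⟩ + 1), ?_, ?_⟩
      · rw [Fintype.mem_piFinset]
        intro s
        rw [Finset.mem_range]
        have hks := Finset.mem_range.mp (Fintype.mem_piFinset.mp hk s)
        rcases eq_or_ne s ⟨t, ht⟩ with rfl | hne
        · rw [Function.update_self]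
          omega
        · rw [Function.update_of_ne hne]
          omega
      · have ht₀ : (⟨t, ht⟩ : {x // x ∈ S}) ∈ Finset.univ := Finset.mem_univ _
        rw [Finset.sum_eq_sum_sdiff_singleton_add ht₀
            (fun s => Function.update k ⟨t, ht⟩ (k ⟨t, ht⟩ + 1) s • (s : α)),
          Finset.sum_eq_sum_sdiff_singleton_add ht₀ (fun s => k s • (s : α))]
        have hcong : ∑ s ∈ Finset.univ \ {(⟨t, ht⟩ : {x // x ∈ S})},
              Function.update k ⟨t, ht⟩ (k ⟨t, ht⟩ + 1) s • (s : α)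
            = ∑ s ∈ Finset.univ \ {(⟨t, ht⟩ : {x // x ∈ S})}, k s • (s : α) := by
          refine Finset.sum_congr rfl fun s hs => ?_
          rw [Function.update_of_ne]
          have := (Finset.mem_sdiff.mp hs).2
          simpa using this
        rw [hcong, Function.update_self, succ_nsmul]
        abel
  refine le_trans (Finset.card_le_card (key m)) ?_
  refine le_trans Finset.card_image_le ?_
  rw [Fintype.card_piFinset]
  simp

lemma exists_pow_lt' (K : ℕ) (hK : 1 ≤ K) : ∃ m : ℕ, (m+1) ^ K < 2 ^ m := by
  have h1 : ∀ j : ℕ, (j+1)^2 ≤ 4^j := by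
    intro j
    induction j with
    | zero => norm_num
    | succ j ih =>
      have hj : 1 ≤ j + 1 := Nat.le_add_left 1 j
      calc (j+1+1)^2 ≤ 4*(j+1)^2 := by nlinarith [hj, sq_nonneg (j+1)]
        _ ≤ 4*4^j := by nlinarith
        _ = 4^(j+1) := by ring
  refine ⟨K * (2*K+2), ?_⟩
  have h4 : (2:ℕ)^(2*K+2) = 4 * 4^K := by
    rw [pow_add, pow_mul, Nat.mul_comm]
    norm_num
  have h2 : K*(2*K+2)+1 < 2^(2*K+2) := by
    rw [h4]
    nlinarith [h1 K]
  calc (K*(2*K+2)+1)^K < (2^(2*K+2))^K := Nat.pow_lt_pow_left h2 (by omega)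
    _ = 2^(K*(2*K+2)) := by rw [← pow_mul, Nat.mul_comm]

open Pointwise in
lemma exists_doubling {α : Type*} [AddCommMonoid α] [DecidableEq α] (S : Finset α)
    (h0 : (0:α) ∈ S) : ∃ m : ℕ, ((m+1) • S).card < 2 * (m • S).card := by
  by_contra hcon
  push_neg at hcon
  have hlow : ∀ m : ℕ, 2^m ≤ (m • S).card := by
    intro m
    induction m with
    | zero =>
      have h01 : (0:α) ∈ (0:ℕ) • S := nsmul_finset_zero_mem h0 0
      have := Finset.card_pos.mpr ⟨0, h01⟩
      simpa using this
    | succ m ih =>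
      calc 2^(m+1) = 2 * 2^m := by ring
        _ ≤ 2 * (m • S).card := by omega
        _ ≤ ((m+1) • S).card := hcon m
  obtain ⟨m, hm⟩ := exists_pow_lt' S.card (Finset.card_pos.mpr ⟨0, h0⟩)
  have hhi := card_nsmul_le S m
  have hlo := hlow m
  omega

/-! ### The key multiplication step -/

open Pointwise in
lemma step_mul {n : ℕ} (hn : 0 < n) [DecidableEq (RV n × RV n)]
    (S₀ : Finset (RV n × RV n)) (m : ℕ)
    {e : (RV n × RV n) →₀ ℂ} (he0 : e ≠ 0) (heS : e.support ⊆ S₀) :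
    Module.finrank ℂ (Submodule.map (LinearMap.mulRight ℂ (Phi n e))
        (Submodule.span ℂ (TFSp '' ((m • S₀ : Finset _) : Set (RV n × RV n)))))
      = (m • S₀).card ∧
    Submodule.map (LinearMap.mulRight ℂ (Phi n e))
        (Submodule.span ℂ (TFSp '' ((m • S₀ : Finset _) : Set (RV n × RV n))))
      ≤ Submodule.span ℂ (TFSp '' ((((m+1) • S₀ : Finset _)) : Set (RV n × RV n))) := by
  classical
  set Wm := Submodule.span ℂ (TFSp '' ((m • S₀ : Finset _) : Set (RV n × RV n))) with hWm
  constructor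
  · -- rank is preserved
    set f := (LinearMap.mulRight ℂ (Phi n e)).domRestrict Wm with hf
    have hker : ∀ x : Wm, f x = 0 → x = 0 := by
      rintro ⟨x, hx⟩ hfx
      obtain ⟨c, hcsupp, hcx⟩ := (Finsupp.mem_span_image_iff_linearCombination ℂ).mp hx
      have hc : Phi n c = x := hcx
      have hzero : Phi n (tconv c e) = 0 := by
        rw [Phi_tconv, hc]
        exact hfx
      have htz : tconv c e = 0 :=
        Phi_injective hn (by rw [hzero, map_zero])
      have hc0 : c = 0 := by
        by_contra hc0
        exact tconv_ne_zero hc0 he0 htz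
      apply Subtype.ext
      show x = 0
      rw [← hc, hc0, map_zero]
    have hinj : Function.Injective f := by
      rw [← LinearMap.ker_eq_bot]
      exact LinearMap.ker_eq_bot'.mpr hker
    have h1 := LinearMap.finrank_range_of_inj hinj
    rw [LinearMap.range_domRestrict] at h1
    rw [h1, hWm, span_image_finrank hn]
  · -- image is contained in the next space
    rw [hWm, Submodule.map_span]
    refine Submodule.span_le.mpr ?_
    rintro y ⟨z, ⟨g, hg, rfl⟩, rfl⟩
    show (LinearMap.mulRight ℂ (Phi n e)) (TFSp g) ∈ _
    rw [LinearMap.mulRight_apply]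
    have hTP : TFSp g * Phi n e = Phi n (tconv (Finsupp.single g 1) e) := by
      rw [Phi_tconv, Phi_single, one_smul]
    rw [hTP]
    refine Phi_mem_span ?_
    refine (support_tconv _ _).trans ?_
    have hsub : ((Finsupp.single g (1:ℂ)).support : Set (RV n × RV n)) ⊆ {g} := by
      intro x hx
      have := Finsupp.support_single_subset (Finset.mem_coe.mp hx)
      simpa using this
    refine (Set.add_subset_add hsub (Finset.coe_subset.mpr heS)).trans ?_
    have hgm : ({g} : Set (RV n × RV n)) ⊆ ↑(m • S₀) := by
      simpa using hg
    refine (Set.add_subset_add hgm (subset_refl _)).trans ?_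
    rw [← Finset.coe_add, ← succ_nsmul]

/-! ### The Ore condition in `ℂ*G` -/

open Pointwise in
lemma ore_main {n : ℕ} (hn : 0 < n) (G : AddSubgroup (RV n × RV n))
    {α β : L2 n →L[ℂ] L2 n} (hα : α ∈ spanTFS n G) (hβ : β ∈ spanTFS n G)
    (hα0 : α ≠ 0) (hβ0 : β ≠ 0) :
    ∃ γ δ : L2 n →L[ℂ] L2 n, γ ∈ spanTFS n G ∧ δ ∈ spanTFS n G ∧
      γ * α = δ * β ∧ γ * α ≠ 0 := by
  classical
  rw [spanTFS_eq] at hα hβ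
  obtain ⟨a, haG, haα⟩ := (Finsupp.mem_span_image_iff_linearCombination ℂ).mp hα
  obtain ⟨b, hbG, hbβ⟩ := (Finsupp.mem_span_image_iff_linearCombination ℂ).mp hβ
  rw [Finsupp.mem_supported] at haG hbG
  have hPa : Phi n a = α := haα
  have hPb : Phi n b = β := hbβ
  have ha0 : a ≠ 0 := fun h => hα0 (by rw [← hPa, h, map_zero])
  have hb0 : b ≠ 0 := fun h => hβ0 (by rw [← hPb, h, map_zero])
  set S₀ : Finset (RV n × RV n) := insert 0 (a.support ∪ b.support) with hS₀
  have h0S₀ : (0 : RV n × RV n) ∈ S₀ := Finset.mem_insert_self _ _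
  have haS₀ : a.support ⊆ S₀ := fun x hx =>
    Finset.mem_insert_of_mem (Finset.mem_union_left _ hx)
  have hbS₀ : b.support ⊆ S₀ := fun x hx =>
    Finset.mem_insert_of_mem (Finset.mem_union_right _ hx)
  have hS₀G : ↑S₀ ⊆ (G : Set (RV n × RV n)) := by
    intro x hx
    rcases Finset.mem_insert.mp hx with rfl | hx
    · exact G.zero_mem
    · rcases Finset.mem_union.mp hx with hx | hx
      exacts [haG hx, hbG hx]
  obtain ⟨m, hm⟩ := exists_doubling S₀ h0S₀
  have hstepa := step_mul hn S₀ m ha0 haS₀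
  have hstepb := step_mul hn S₀ m hb0 hbS₀
  rw [hPa] at hstepa
  rw [hPb] at hstepb
  set Wm := Submodule.span ℂ (TFSp '' ((m • S₀ : Finset _) : Set (RV n × RV n))) with hWm
  set Wm1 := Submodule.span ℂ
    (TFSp '' (((m+1) • S₀ : Finset _) : Set (RV n × RV n))) with hWm1
  set U := Submodule.map (LinearMap.mulRight ℂ α) Wm with hU
  set V := Submodule.map (LinearMap.mulRight ℂ β) Wm with hV
  haveI hW1f : FiniteDimensional ℂ Wm1 := finiteDimensional_span_image _
  haveI hUf : FiniteDimensional ℂ U := Submodule.finiteDimensional_of_le hstepa.2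
  haveI hVf : FiniteDimensional ℂ V := Submodule.finiteDimensional_of_le hstepb.2
  have hsup_le : U ⊔ V ≤ Wm1 := sup_le hstepa.2 hstepb.2
  have h1 : Module.finrank ℂ ↥(U ⊔ V) ≤ ((m+1) • S₀).card := by
    refine le_trans (Submodule.finrank_mono hsup_le) ?_
    rw [hWm1, span_image_finrank hn]
  have hformula := Submodule.finrank_sup_add_finrank_inf_eq U V
  have hne : U ⊓ V ≠ ⊥ := by
    intro hbot
    rw [hbot, finrank_bot] at hformula
    rw [hstepa.1, hstepb.1] at hformula
    omega
  obtain ⟨ξ, hξmem, hξ0⟩ := Submodule.exists_mem_ne_zero_of_ne_bot hne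
  obtain ⟨γ, hγW, hγ⟩ := Submodule.mem_map.mp hξmem.1
  obtain ⟨δ, hδW, hδ⟩ := Submodule.mem_map.mp hξmem.2
  have hWle : Wm ≤ spanTFS n G := by
    rw [hWm, spanTFS_eq]
    refine Submodule.span_le.mpr ?_
    rintro y ⟨g, hg, rfl⟩
    exact Submodule.subset_span
      ⟨g, nsmul_finset_subset_subgroup hS₀G m hg, rfl⟩
  rw [LinearMap.mulRight_apply] at hγ hδ
  refine ⟨γ, δ, hWle hγW, hWle hδW, ?_, ?_⟩
  · rw [hγ, hδ]
  · rw [hγ]; exact hξ0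


/-- For any subgroup `G ≤ ℝ²ⁿ`, nonzero left ideals of `ℂ*G` have nonzero
intersection; in particular `ℂ*G ∖ {0}` satisfies the left Ore condition. -/
theorem statement7 (n : ℕ) (hn : 0 < n) (G : AddSubgroup (RV n × RV n))
    (I J : Ideal ↥(CGalg n G)) (hI : I ≠ ⊥) (hJ : J ≠ ⊥) :
    I ⊓ J ≠ ⊥ ∧
      ∀ α β : ↥(CGalg n G), α ≠ 0 → β ≠ 0 →
        ∃ γ δ : ↥(CGalg n G), γ * α = δ * β ∧ γ * α ≠ 0 := by
  have hcoe : ∀ x : ↥(CGalg n G), (x : L2 n →L[ℂ] L2 n) ∈ spanTFS n G :=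
    fun x => Submodule.mem_toSubalgebra.mp x.2
  have main : ∀ α β : ↥(CGalg n G), α ≠ 0 → β ≠ 0 →
      ∃ γ δ : ↥(CGalg n G), γ * α = δ * β ∧ γ * α ≠ 0 := by
    intro α β hα hβ
    have hα0 : (α : L2 n →L[ℂ] L2 n) ≠ 0 :=
      fun h => hα (ZeroMemClass.coe_eq_zero.mp h)
    have hβ0 : (β : L2 n →L[ℂ] L2 n) ≠ 0 :=
      fun h => hβ (ZeroMemClass.coe_eq_zero.mp h)
    obtain ⟨γ, δ, hγm, hδm, heq, hne⟩ := ore_main hn G (hcoe α) (hcoe β) hα0 hβ0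
    have hγC : γ ∈ CGalg n G := Submodule.mem_toSubalgebra.mpr hγm
    have hδC : δ ∈ CGalg n G := Submodule.mem_toSubalgebra.mpr hδm
    refine ⟨⟨γ, hγC⟩, ⟨δ, hδC⟩, ?_, ?_⟩
    · apply Subtype.ext
      rw [MulMemClass.coe_mul, MulMemClass.coe_mul]
      exact heq
    · intro h
      apply hne
      have h2 := congrArg Subtype.val h
      rw [MulMemClass.coe_mul, ZeroMemClass.coe_zero] at h2
      exact h2
  refine ⟨?_, main⟩
  obtain ⟨α, hαI, hα0⟩ := Submodule.exists_mem_ne_zero_of_ne_bot hI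
  obtain ⟨β, hβJ, hβ0⟩ := Submodule.exists_mem_ne_zero_of_ne_bot hJ
  obtain ⟨γ, δ, heq, hne⟩ := main α β hα0 hβ0
  intro hbot
  have h1 : γ * α ∈ I := I.mul_mem_left γ hαI
  have h2 : γ * α ∈ J := by rw [heq]; exact J.mul_mem_left δ hβJ
  have hmem : γ * α ∈ I ⊓ J := Submodule.mem_inf.mpr ⟨h1, h2⟩
  rw [hbot] at hmem
  exact hne (Ideal.mem_bot.mp hmem)



end
end

section
/- Let n be a positive integer, let G be a discrete subgroup of ℝ^{2n}, let H be a subgroup of G such that the quotient group G/H is infinite cyclic, and let x ∈ G be an element whose coset Hx generates G/H. If ζ ∈ ℂ with |ζ| = 1, then there exists y ∈ ℝ^{2n} such that π(y) π(h) π(y)⁻¹ = π(h) for all h ∈ H and π(y) π(x) π(y)⁻¹ = ζ·π(x) in B(L²(ℝⁿ)). -/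
set_option maxHeartbeats 1000000
set_option synthInstance.maxHeartbeats 1000000

open MeasureTheory Complex

noncomputable section

open Submodule Module in
lemma exists_linear_extension {E : Type*} [NormedAddCommGroup E] [NormedSpace ℝ E]
    [FiniteDimensional ℝ E] (G : AddSubgroup E) (hG : DiscreteTopology G)
    (ψ : G →+ ℝ) : ∃ L : E →ₗ[ℝ] ℝ, ∀ g : G, L (g : E) = ψ g := by
  classical
  set M : Submodule ℤ E := AddSubgroup.toIntSubmodule G with hM
  have hMd : DiscreteTopology M := hG
  set V : Submodule ℝ E := Submodule.span ℝ (M : Set E) with hV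
  set f : V →ₗ[ℝ] E := V.subtype with hf
  set M₀ : Submodule ℤ V := M.comap (f.restrictScalars ℤ) with hM₀
  have hdisc : DiscreteTopology M₀ := by
    refine DiscreteTopology.preimage_of_continuous_injective (M : Set E) ?_
      (Submodule.injective_subtype _)
    exact LinearMap.continuous_of_finiteDimensional f
  have h_img : f '' M₀ = M := by
    rw [← LinearMap.coe_restrictScalars ℤ f, ← Submodule.map_coe (f.restrictScalars ℤ),
      Submodule.map_comap_eq_self]
    exact fun x hx ↦ LinearMap.mem_range.mpr ⟨⟨x, Submodule.subset_span hx⟩, rfl⟩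
  have hzl : IsZLattice ℝ M₀ := ⟨by
    rw [← (Submodule.map_injective_of_injective (Submodule.injective_subtype _)).eq_iff,
      Submodule.map_span, Submodule.map_top, Submodule.range_subtype, h_img]⟩
  have hfree : Module.Free ℤ M₀ := ZLattice.module_free ℝ M₀
  have hfin : Module.Finite ℤ M₀ := ZLattice.module_finite ℝ M₀
  let b := Module.Free.chooseBasis ℤ M₀
  let c := b.ofZLatticeBasis ℝ M₀
  let toG : M₀ →+ G :=
    { toFun := fun m => ⟨((m : V) : E), m.2⟩
      map_zero' := rfl
      map_add' := fun _ _ => rfl }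
  let L₀ : V →ₗ[ℝ] ℝ := c.constr ℝ (fun i => ψ (toG (b i)))
  have key : ∀ m : M₀, L₀ ((m : V)) = ψ (toG m) := by
    have hext : (L₀.restrictScalars ℤ).comp M₀.subtype = (ψ.comp toG).toIntLinearMap := by
      refine Basis.ext b fun i => ?_
      have hc : (c i : V) = ((b i : M₀) : V) := b.ofZLatticeBasis_apply ℝ M₀ i
      simp only [LinearMap.coe_comp, Function.comp_apply, LinearMap.coe_restrictScalars,
        Submodule.coe_subtype, AddMonoidHom.coe_toIntLinearMap, AddMonoidHom.coe_comp]
      rw [← hc]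
      exact Basis.constr_basis c ℝ _ i
    intro m
    have := LinearMap.congr_fun hext m
    simpa using this
  obtain ⟨W, hW⟩ := Submodule.exists_isCompl V
  refine ⟨L₀.comp (Submodule.linearProjOfIsCompl V W hW), fun g => ?_⟩
  have hgV : (g : E) ∈ V := Submodule.subset_span g.2
  have hpr : Submodule.linearProjOfIsCompl V W hW (g : E) = ⟨(g : E), hgV⟩ :=
    Submodule.linearProjOfIsCompl_apply_left hW ⟨(g : E), hgV⟩
  have hm : (⟨(g : E), hgV⟩ : V) ∈ M₀ := g.2
  have := key ⟨⟨(g : E), hgV⟩, hm⟩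
  simp only [LinearMap.coe_comp, Function.comp_apply, hpr]
  rw [this]
  congr 1

lemma dotR_neg_right {n : ℕ} (a b : RV n) : dotR a (-b) = - dotR a b := by
  simp [dotR, Finset.sum_neg_distrib]

lemma ringInverse_TFSp {n : ℕ} (y : RV n × RV n) :
    Ring.inverse (TFSp y)
      = Complex.exp (((2 * Real.pi * dotR y.1 y.2 : ℝ) : ℂ) * Complex.I) • TFSp (-y) := by
  have hsc : Complex.exp (((2 * Real.pi * dotR y.1 y.2 : ℝ) : ℂ) * Complex.I)
      * Complex.exp (((2 * Real.pi * dotR y.1 (-y).2 : ℝ) : ℂ) * Complex.I) = 1 := by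
    rw [← Complex.exp_add, ← Complex.exp_zero]
    congr 1
    have h2 : (-y).2 = -y.2 := rfl
    rw [h2, dotR_neg_right]
    push_cast
    ring
  have hsc2 : Complex.exp (((2 * Real.pi * dotR y.1 y.2 : ℝ) : ℂ) * Complex.I)
      * Complex.exp (((2 * Real.pi * dotR (-y).1 y.2 : ℝ) : ℂ) * Complex.I) = 1 := by
    rw [← Complex.exp_add, ← Complex.exp_zero]
    congr 1
    have h2 : (-y).1 = -y.1 := rfl
    have h3 : dotR (-y.1) y.2 = - dotR y.1 y.2 := by
      rw [dotR_comm, dotR_neg_right, dotR_comm]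
    rw [h2, h3]
    push_cast
    ring
  have h0 : TFSp (0 : RV n × RV n) = 1 := TFS_one
  have hy0 : y + -y = (0 : RV n × RV n) := by abel
  have hy0' : -y + y = (0 : RV n × RV n) := by abel
  have h1 : TFSp y * (Complex.exp (((2 * Real.pi * dotR y.1 y.2 : ℝ) : ℂ) * Complex.I)
      • TFSp (-y)) = 1 := by
    rw [mul_smul_comm, TFSp_mul, smul_smul, hy0, h0, hsc, one_smul]
  have h2 : (Complex.exp (((2 * Real.pi * dotR y.1 y.2 : ℝ) : ℂ) * Complex.I)
      • TFSp (-y)) * TFSp y = 1 := by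
    rw [smul_mul_assoc, TFSp_mul, smul_smul, hy0', h0, hsc2, one_smul]
  exact Ring.inverse_unit ⟨TFSp y, _, h1, h2⟩

lemma TFSp_conj {n : ℕ} (y v : RV n × RV n) :
    TFSp y * TFSp v * Ring.inverse (TFSp y)
      = Complex.exp (((2 * Real.pi * (dotR y.1 v.2 - dotR v.1 y.2) : ℝ) : ℂ) * Complex.I)
        • TFSp v := by
  rw [ringInverse_TFSp, TFSp_mul, smul_mul_assoc, mul_smul_comm, TFSp_mul, smul_smul, smul_smul]
  have harg : y + v + -y = v := by abel
  rw [harg]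
  congr 1
  rw [← Complex.exp_add, ← Complex.exp_add]
  congr 1
  have h1 : (y + v).1 = y.1 + v.1 := rfl
  have h2 : (-y).2 = -y.2 := rfl
  rw [h1, h2, dotR_neg_right, dotR_add_left]
  push_cast
  ring

/-- Let `G ≤ ℝ²ⁿ` be discrete, `H ≤ G` with `G/H` infinite cyclic, `x ∈ G`
with `Hx` generating `G/H`, and `|ζ| = 1`.  Then there is `y ∈ ℝ²ⁿ` with
`π(y) π(h) π(y)⁻¹ = π(h)` for all `h ∈ H` and `π(y) π(x) π(y)⁻¹ = ζ π(x)`. -/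
theorem statement8 (n : ℕ) (hn : 0 < n) (G : AddSubgroup (RV n × RV n))
    (hG : DiscreteTopology G) (H : AddSubgroup G)
    (e : (G ⧸ H) ≃+ ℤ) (x : G)
    (hx : AddSubgroup.zmultiples ((x : G ⧸ H)) = ⊤)
    (ζ : ℂ) (hζ : ‖ζ‖ = 1) :
    ∃ y : RV n × RV n,
      (∀ h : H, TFSp y * TFSp ((h : G) : RV n × RV n) * Ring.inverse (TFSp y)
          = TFSp ((h : G) : RV n × RV n))
      ∧ TFSp y * TFSp (x : RV n × RV n) * Ring.inverse (TFSp y)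
          = ζ • TFSp (x : RV n × RV n) := by
  classical
  obtain ⟨k, hk⟩ : ∃ k : ℤ, k • ((x : G ⧸ H)) = e.symm 1 := by
    have h1 : e.symm 1 ∈ AddSubgroup.zmultiples ((x : G ⧸ H)) := by rw [hx]; trivial
    exact AddSubgroup.mem_zmultiples_iff.mp h1
  set m : ℤ := e ((x : G ⧸ H)) with hm
  have hkm : k * m = 1 := by
    have := congrArg e hk
    rw [map_zsmul, AddEquiv.apply_symm_apply] at this
    simpa [smul_eq_mul] using this
  have hmm : m * m = 1 := by
    rcases Int.isUnit_iff.mp (IsUnit.of_mul_eq_one (a := m) k (by linarith [mul_comm k m])) with h | h <;>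
      rw [h] <;> norm_num
  set c : ℝ := Complex.arg ζ / (2 * Real.pi) with hc
  set q : G →+ ℤ := e.toAddMonoidHom.comp (QuotientAddGroup.mk' H) with hq
  set ψ : G →+ ℝ :=
    { toFun := fun g => c * ((m * q g : ℤ) : ℝ)
      map_zero' := by simp
      map_add' := fun g₁ g₂ => by push_cast [map_add]; ring } with hψ
  obtain ⟨L, hL⟩ := exists_linear_extension G hG ψ
  set y : RV n × RV n := (fun i => L (0, fun j => if i = j then 1 else 0), fun i => - L ((fun j => if i = j then 1 else 0), 0)) with hy
  have hσ : ∀ v : RV n × RV n, dotR y.1 v.2 - dotR v.1 y.2 = L v := by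
    intro v
    have hv : ((v.1, (0 : RV n)) : RV n × RV n) + ((0 : RV n), v.2) = v := by
      ext <;> simp
    have h1 : L v = L (v.1, 0) + L (0, v.2) := by rw [← map_add, hv]
    have e1 : L (v.1, (0 : RV n)) = ∑ i, v.1 i * L ((fun j => if i = j then 1 else 0), 0) := by
      simpa [smul_eq_mul] using
        LinearMap.pi_apply_eq_sum_univ (L.comp (LinearMap.inl ℝ (RV n) (RV n))) v.1
    have e2 : L ((0 : RV n), v.2) = ∑ i, v.2 i * L (0, fun j => if i = j then 1 else 0) := by
      simpa [smul_eq_mul] using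
        LinearMap.pi_apply_eq_sum_univ (L.comp (LinearMap.inr ℝ (RV n) (RV n))) v.2
    rw [h1, e1, e2]
    simp only [dotR, hy]
    rw [← Finset.sum_sub_distrib, ← Finset.sum_add_distrib]
    exact Finset.sum_congr rfl fun i _ => by ring
  refine ⟨y, fun h => ?_, ?_⟩
  · rw [TFSp_conj, hσ, hL]
    have hq0 : q ((h : G)) = 0 := by
      simp only [hq, AddMonoidHom.comp_apply, AddEquiv.coe_toAddMonoidHom]
      rw [show (QuotientAddGroup.mk' H) ((h : G)) = 0 from
        (QuotientAddGroup.eq_zero_iff _).mpr h.2]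
      exact map_zero e
    have : ψ ((h : G)) = 0 := by simp [hψ, hq0]
    rw [this]
    norm_num
  · rw [TFSp_conj, hσ, hL]
    have hqx : q x = m := rfl
    have : ψ x = c := by
      simp only [hψ, AddMonoidHom.coe_mk, ZeroHom.coe_mk, hqx, hmm]
      norm_num
    rw [this]
    congr 1
    have hπ : (2 : ℝ) * Real.pi ≠ 0 := by
      positivity
    have harg : 2 * Real.pi * c = Complex.arg ζ := by
      rw [hc]; field_simp
    have habs := Complex.norm_mul_cos_add_sin_mul_I ζ
    rw [hζ] at habs
    push_cast at habs
    rw [one_mul] at habs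
    rw [harg, Complex.exp_mul_I, habs]

end
end
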